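/- Let x, y, z be distinct points in ℝⁿ, l(x,y,z) = |x−y| + |x−z| + |y−z|, τ(x,y,z) = π − max{∠zxy, ∠zyx}, and g_z(x) = (x−z)/|x−z|. Then (2|x−y|²/(π²·l(x,y,z)))·τ(x,y,z)² ≤ ⟨g_z(x) − g_z(y), x − y⟩ ≤ (4|x−y|²/l(x,y,z))·τ(x,y,z)². -/

import Mathlib

open EuclideanGeometry

private lemma sin_rule_aux {c s t B C : ℝ} (hc : 0 < c) (hs : 0 < s) (ht : 0 < t)
    (hb0 : 0 ≤ Real.sin B) (hc0 : 0 ≤ Real.sin C)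
    (e1 : c*c = s*s + t*t - 2*s*t*Real.cos C)
    (e2 : s*s = c*c + t*t - 2*c*t*Real.cos B) :
    c * Real.sin B = s * Real.sin C := by
  have pb := Real.sin_sq_add_cos_sq B
  have pc := Real.sin_sq_add_cos_sq C
  have h2 : (2*t*(c*Real.sin B))^2 = (2*t*(s*Real.sin C))^2 := by
    linear_combination (4*t^2*c^2) * pb - (4*t^2*s^2) * pc
      + (2*s*t*Real.cos C + (s^2+t^2-c^2)) * e1 - (2*c*t*Real.cos B + (c^2+t^2-s^2)) * e2
  have g1 : 0 ≤ 2*t*(c*Real.sin B) := by positivity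
  have g2 : 0 ≤ 2*t*(s*Real.sin C) := by positivity
  have h3 : 2*t*(c*Real.sin B) = 2*t*(s*Real.sin C) := by
    calc 2*t*(c*Real.sin B) = Real.sqrt ((2*t*(c*Real.sin B))^2) := (Real.sqrt_sq g1).symm
    _ = Real.sqrt ((2*t*(s*Real.sin C))^2) := by rw [h2]
    _ = 2*t*(s*Real.sin C) := Real.sqrt_sq g2
  exact mul_left_cancel₀ (by positivity) h3

private lemma key_aux {c s t B C : ℝ} (hc : 0 < c) (hs : 0 < s) (ht : 0 < t)
    (hB0 : 0 ≤ Real.sin B) (hC0 : 0 ≤ Real.sin C)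
    (e1 : c*c = s*s + t*t - 2*s*t*Real.cos C)
    (e2 : s*s = c*c + t*t - 2*c*t*Real.cos B) :
    (s + t) * Real.sin (C/2) = c * Real.sin (B + C/2) := by
  have hsin : c * Real.sin B = s * Real.sin C := sin_rule_aux hc hs ht hB0 hC0 e1 e2
  have hproj : t = s * Real.cos C + c * Real.cos B := by
    have h' : t*t = t*(s*Real.cos C + c*Real.cos B) := by
      linear_combination (-(1:ℝ)/2)*e1 - (1/2)*e2
    exact mul_left_cancel₀ ht.ne' h'
  have p := Real.sin_sq_add_cos_sq (C/2)
  have hs2 : Real.sin C = 2*Real.sin (C/2)*Real.cos (C/2) := by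
    have h := Real.sin_two_mul (C/2)
    rw [show 2*(C/2) = C by ring] at h; linarith
  have hc2 : Real.cos C = 1 - 2*Real.sin (C/2)^2 := by
    have h := Real.cos_two_mul (C/2)
    rw [show 2*(C/2) = C by ring] at h; linarith [Real.sin_sq_add_cos_sq (C/2)]
  symm
  calc c * Real.sin (B + C/2)
      = (c*Real.sin B)*Real.cos (C/2) + (c*Real.cos B)*Real.sin (C/2) := by
        rw [Real.sin_add]; ring
    _ = (s*Real.sin C)*Real.cos (C/2) + (t - s*Real.cos C)*Real.sin (C/2) := by
        rw [hsin, show c*Real.cos B = t - s*Real.cos C from by linarith]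
    _ = (s+t) * Real.sin (C/2) := by
        rw [hs2, hc2]; linear_combination (2*s*Real.sin (C/2)) * p

private lemma key_pt (n : ℕ) (x y z : EuclideanSpace ℝ (Fin n))
    (hxy : x ≠ y) (hxz : x ≠ z) (hyz : y ≠ z) :
    (‖x - z‖ + ‖y - z‖) * Real.sin (∠ x z y / 2)
      = ‖x - y‖ * Real.sin (∠ z y x + ∠ x z y / 2) := by
  have hc : 0 < ‖x - y‖ := by rw [norm_sub_pos_iff]; exact hxy
  have hs : 0 < ‖x - z‖ := by rw [norm_sub_pos_iff]; exact hxz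
  have ht : 0 < ‖y - z‖ := by rw [norm_sub_pos_iff]; exact hyz
  have e1 : ‖x-y‖*‖x-y‖ = ‖x-z‖*‖x-z‖ + ‖y-z‖*‖y-z‖
      - 2*‖x-z‖*‖y-z‖*Real.cos (∠ x z y) := by
    have h := EuclideanGeometry.law_cos x z y
    simpa [dist_eq_norm] using h
  have e2 : ‖x-z‖*‖x-z‖ = ‖x-y‖*‖x-y‖ + ‖y-z‖*‖y-z‖
      - 2*‖x-y‖*‖y-z‖*Real.cos (∠ z y x) := by
    have h := EuclideanGeometry.law_cos x y z
    rw [EuclideanGeometry.angle_comm x y z] at h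
    simpa [dist_eq_norm, dist_comm, norm_sub_rev z y] using h
  exact key_aux hc hs ht
    (Real.sin_nonneg_of_nonneg_of_le_pi (angle_nonneg _ _ _) (angle_le_pi _ _ _))
    (Real.sin_nonneg_of_nonneg_of_le_pi (angle_nonneg _ _ _) (angle_le_pi _ _ _)) e1 e2

set_option maxHeartbeats 1000000 in
theorem stmt3 (n : ℕ) (x y z : EuclideanSpace ℝ (Fin n))
    (hxy : x ≠ y) (hxz : x ≠ z) (hyz : y ≠ z) :
    2 * ‖x - y‖ ^ 2 / (Real.pi ^ 2 * (‖x - y‖ + ‖x - z‖ + ‖y - z‖)) *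
        (Real.pi - max (∠ z x y) (∠ z y x)) ^ 2 ≤
      (inner ℝ ((‖x - z‖⁻¹ • (x - z)) - (‖y - z‖⁻¹ • (y - z))) (x - y) : ℝ) ∧
    (inner ℝ ((‖x - z‖⁻¹ • (x - z)) - (‖y - z‖⁻¹ • (y - z))) (x - y) : ℝ) ≤
      4 * ‖x - y‖ ^ 2 / (‖x - y‖ + ‖x - z‖ + ‖y - z‖) *
        (Real.pi - max (∠ z x y) (∠ z y x)) ^ 2 := by
  have hc : 0 < ‖x - y‖ := by rw [norm_sub_pos_iff]; exact hxy
  have hs : 0 < ‖x - z‖ := by rw [norm_sub_pos_iff]; exact hxz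
  have ht : 0 < ‖y - z‖ := by rw [norm_sub_pos_iff]; exact hyz
  have hπ := Real.pi_pos
  -- inner product identity
  have hinner : (inner ℝ ((‖x - z‖⁻¹ • (x - z)) - (‖y - z‖⁻¹ • (y - z))) (x - y) : ℝ)
      = (‖x - z‖ + ‖y - z‖) * (1 - Real.cos (∠ x z y)) := by
    have hab : (inner ℝ (x - z) (y - z) : ℝ) = Real.cos (∠ x z y) * (‖x - z‖ * ‖y - z‖) :=
      (InnerProductGeometry.cos_angle_mul_norm_mul_norm _ _).symm
    have hxy' : x - y = (x - z) - (y - z) := by abel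
    rw [hxy']
    generalize x - z = a at hab hs ⊢
    generalize y - z = b at hab ht ⊢
    rw [inner_sub_left, inner_sub_right, inner_sub_right,
      real_inner_smul_left, real_inner_smul_left, real_inner_smul_left, real_inner_smul_left,
      real_inner_self_eq_norm_mul_norm, real_inner_self_eq_norm_mul_norm,
      real_inner_comm a b, hab]
    field_simp
    ring
  -- abbreviations
  set c := ‖x - y‖ with hc_def
  set s := ‖x - z‖ with hs_def
  set t := ‖y - z‖ with ht_def
  set A := ∠ z x y with hA_def
  set B := ∠ z y x with hB_def
  set C := ∠ x z y with hC_def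
  have hA0 : 0 ≤ A := angle_nonneg z x y
  have hB0 : 0 ≤ B := angle_nonneg z y x
  have hC0 : 0 ≤ C := angle_nonneg x z y
  have hCpi : C ≤ Real.pi := angle_le_pi x z y
  have hsum : B + C + A = Real.pi := by
    have h := EuclideanGeometry.angle_add_angle_add_angle_eq_pi
      z (Ne.symm hxy)
    rw [EuclideanGeometry.angle_comm x y z, EuclideanGeometry.angle_comm y z x] at h
    exact h
  have htri : c ≤ s + t := by
    have h := dist_triangle x z y
    simpa [hc_def, hs_def, ht_def, dist_eq_norm, norm_sub_rev z y] using h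
  have hK1 : (s + t) * Real.sin (C/2) = c * Real.sin (B + C/2) :=
    key_pt n x y z hxy hxz hyz
  have hK2 : (s + t) * Real.sin (C/2) = c * Real.sin (A + C/2) := by
    have h := key_pt n y x z (Ne.symm hxy) hyz hxz
    rw [EuclideanGeometry.angle_comm y z x, norm_sub_rev y x] at h
    linear_combination h
  have hKm : (s + t) * Real.sin (C/2) = c * Real.sin (min A B + C/2) := by
    rcases le_total A B with h | h
    · rw [min_eq_left h]; exact hK2
    · rw [min_eq_right h]; exact hK1
  have hsu : 0 ≤ Real.sin (C/2) :=
    Real.sin_nonneg_of_nonneg_of_le_pi (by linarith) (by linarith)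
  have hcos2 : Real.cos C = 1 - 2 * Real.sin (C/2)^2 := by
    have h := Real.cos_two_mul (C/2)
    rw [show 2*(C/2) = C by ring] at h
    linarith [Real.sin_sq_add_cos_sq (C/2)]
  have hmin0 : 0 ≤ min A B := le_min hA0 hB0
  have hmaxeq : Real.pi - max A B = min A B + C := by
    have h := max_add_min A B
    linarith
  -- Claim 1
  have claim1 : (s + t) * Real.sin (C/2) ≤ c * (min A B + C) := by
    rw [hKm]
    have h1 : Real.sin (min A B + C/2) ≤ min A B + C := by
      have := Real.sin_le (show (0:ℝ) ≤ min A B + C/2 by linarith)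
      linarith
    exact mul_le_mul_of_nonneg_left h1 hc.le
  -- Claim 2
  have claim2 : c * (min A B + C) ≤ Real.pi * ((s + t) * Real.sin (C/2)) := by
    rw [hKm]
    have hw : min A B + C/2 ≤ Real.pi/2 := by
      have h1 : min A B ≤ A := min_le_left A B
      have h2 : min A B ≤ B := min_le_right A B
      linarith
    have hj := Real.mul_le_sin (show (0:ℝ) ≤ min A B + C/2 by linarith) hw
    have h2 : min A B + C ≤ Real.pi * Real.sin (min A B + C/2) := by
      have h3 : 2 * (min A B + C/2) ≤ Real.pi * Real.sin (min A B + C/2) := by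
        rw [div_mul_eq_mul_div, div_le_iff₀ hπ] at hj
        nlinarith [hj]
      linarith
    calc c * (min A B + C) ≤ c * (Real.pi * Real.sin (min A B + C/2)) :=
          mul_le_mul_of_nonneg_left h2 hc.le
      _ = Real.pi * (c * Real.sin (min A B + C/2)) := by ring
  have hL : 0 < c + s + t := by linarith
  constructor
  · rw [hinner, hmaxeq, hcos2, div_mul_eq_mul_div, div_le_iff₀ (by positivity)]
    have hsq2 : (c * (min A B + C)) * (c * (min A B + C))
        ≤ (Real.pi * ((s + t) * Real.sin (C/2))) * (Real.pi * ((s + t) * Real.sin (C/2))) :=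
      mul_le_mul claim2 claim2 (by positivity) (by positivity)
    have h9 : 0 ≤ Real.pi^2 * ((s + t) * (Real.sin (C/2)^2 * c)) := by positivity
    nlinarith [hsq2, h9]
  · rw [hinner, hmaxeq, hcos2, div_mul_eq_mul_div, le_div_iff₀ hL]
    have hsq1 : ((s + t) * Real.sin (C/2)) * ((s + t) * Real.sin (C/2))
        ≤ (c * (min A B + C)) * (c * (min A B + C)) :=
      mul_le_mul claim1 claim1 (by positivity) (by positivity)
    have h10 : 0 ≤ Real.sin (C/2)^2 * (s + t) * ((s + t) - c) :=
      mul_nonneg (mul_nonneg (sq_nonneg _) (by linarith)) (by linarith)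
    nlinarith [hsq1, h10]
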